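/- Let n ≥ 1 and x ≥ n be integers. In the multi-jeep model with n designated crossing jeeps and any number m of helper jeeps, for every plan with x tankloads in which each of the n designated jeeps reaches a state with position ≥ d, one has d ≤ 1 + Σ_{j=n+1}^{x} 1/j. -/

import Mathlib

/-- A state of the multi-jeep model with `N` jeeps: each jeep's position and
tank content, and a finitely supported function recording the fuel stored in
depots. -/
structure MultiState (N : ℕ) where
  pos : Fin N → ℝ
  tank : Fin N → ℝ
  depot : ℝ →₀ ℝ

/-- Admissible moves of the multi-jeep model: one jeep drives (consuming one
tankload of fuel per unit of distance), or fuel is moved between the tank of a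
jeep and the depot at its position, or between the tanks of two jeeps at the
same position; tank contents stay in `[0,1]` and depots stay nonnegative. -/
inductive MultiStep {N : ℕ} : MultiState N → MultiState N → Prop
  | drive (s : MultiState N) (i : Fin N) (p' : ℝ)
      (h : 0 ≤ s.tank i - |p' - s.pos i|) :
      MultiStep s ⟨Function.update s.pos i p',
        Function.update s.tank i (s.tank i - |p' - s.pos i|), s.depot⟩
  | transferDepot (s : MultiState N) (i : Fin N) (t' : ℝ) (D' : ℝ →₀ ℝ)
      (hcons : t' + D' (s.pos i) = s.tank i + s.depot (s.pos i))
      (ht0 : 0 ≤ t') (ht1 : t' ≤ 1)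
      (hD : ∀ q, 0 ≤ D' q)
      (heq : ∀ q, q ≠ s.pos i → D' q = s.depot q) :
      MultiStep s ⟨s.pos, Function.update s.tank i t', D'⟩
  | transferJeep (s : MultiState N) (i j : Fin N) (hij : i ≠ j)
      (hpos : s.pos i = s.pos j) (ti' tj' : ℝ)
      (hcons : ti' + tj' = s.tank i + s.tank j)
      (hi0 : 0 ≤ ti') (hi1 : ti' ≤ 1) (hj0 : 0 ≤ tj') (hj1 : tj' ≤ 1) :
      MultiStep s ⟨s.pos,
        Function.update (Function.update s.tank i ti') j tj', s.depot⟩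

/-- The initial state of a plan with `x` tankloads: all jeeps at position `0`
with empty tanks, and `x` tankloads of fuel at position `0`. -/
noncomputable def multiInit (N : ℕ) (x : ℝ) : MultiState N :=
  ⟨fun _ => 0, fun _ => 0, Finsupp.single 0 x⟩
namespace JeepAux

variable {N : ℕ}

/-- Total fuel in a state. -/
noncomputable def totalFuel (s : MultiState N) : ℝ :=
  (s.depot.sum fun _ v => v) + ∑ i, s.tank i

/-- Fuel located strictly to the right of `y`. -/
noncomputable def fuelRight (y : ℝ) (s : MultiState N) : ℝ :=
  (s.depot.sum fun q v => if y < q then v else 0) + ∑ i, if y < s.pos i then s.tank i else 0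

/-- The basic invariant: tanks in `[0,1]`, depots nonnegative. -/
def MInv (s : MultiState N) : Prop :=
  (∀ i, 0 ≤ s.tank i ∧ s.tank i ≤ 1) ∧ ∀ q, 0 ≤ s.depot q

/-- Consumption of a drive from `a` to `b` within the region right of `y`. -/
noncomputable def consR (y a b : ℝ) : ℝ := max (max a b) y - max (min a b) y

/-- Indicator (real valued) of a forward crossing of `y`. -/
noncomputable def fwdI (y a b : ℝ) : ℝ := if a ≤ y ∧ y < b then 1 else 0

lemma consR_self (y a : ℝ) : consR y a a = 0 := by simp [consR]

lemma consR_nonneg (y a b : ℝ) : 0 ≤ consR y a b := by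
  have := max_le_max (le_refl y) (min_le_max (a := a) (b := b))
  simp only [consR]
  have : max (min a b) y ≤ max (max a b) y := max_le_max (min_le_max) (le_refl y)
  linarith

lemma consR_le_abs (a b : ℝ) : consR 0 a b ≤ |b - a| := by
  rw [abs_sub_comm, ← max_sub_min_eq_abs]
  simp only [consR, max_def, min_def]
  split_ifs <;> linarith

end JeepAux
namespace JeepAux2
open JeepAux
variable {N : ℕ}

lemma step_inv {s s' : MultiState N} (h : MultiStep s s') (hs : MInv s) : MInv s' := by
  obtain ⟨ht, hd⟩ := hs
  cases h with
  | drive i p' hdr =>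
    refine ⟨fun i' => ?_, hd⟩
    rcases eq_or_ne i' i with rfl | hne
    · simp only [Function.update_self]
      refine ⟨hdr, ?_⟩
      have h1 := (ht i').2
      have h2 := abs_nonneg (p' - s.pos i')
      linarith
    · simp only [Function.update_of_ne hne]; exact ht i'
  | transferDepot i t' D' hcons ht0 ht1 hD heq =>
    refine ⟨fun i' => ?_, hD⟩
    rcases eq_or_ne i' i with rfl | hne
    · simp only [Function.update_self]; exact ⟨ht0, ht1⟩
    · simp only [Function.update_of_ne hne]; exact ht i'
  | transferJeep i j hij hpos ti' tj' hcons hi0 hi1 hj0 hj1 =>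
    refine ⟨fun i' => ?_, hd⟩
    dsimp only
    rcases eq_or_ne i' j with rfl | hnej
    · simp only [Function.update_self]; exact ⟨hj0, hj1⟩
    · rw [Function.update_of_ne hnej]
      rcases eq_or_ne i' i with rfl | hnei
      · simp only [Function.update_self]; exact ⟨hi0, hi1⟩
      · rw [Function.update_of_ne hnei]; exact ht i'

lemma step_total {s s' : MultiState N} (h : MultiStep s s') :
    totalFuel s' + ∑ i, |s'.pos i - s.pos i| = totalFuel s := by
  cases h with
  | drive i p' hdr =>
    simp only [totalFuel]
    have h1 : (fun i' => |Function.update s.pos i p' i' - s.pos i'|)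
        = Function.update (fun _ => (0:ℝ)) i |p' - s.pos i| := by
      funext i'
      rcases eq_or_ne i' i with rfl | hne
      · simp
      · simp [Function.update_of_ne hne]
    rw [h1, Finset.sum_update_of_mem (Finset.mem_univ i),
      Finset.sum_update_of_mem (Finset.mem_univ i),
      Finset.sum_eq_add_sum_sdiff_singleton_of_mem (Finset.mem_univ i) s.tank]
    simp; ring
  | transferDepot i t' D' hcons ht0 ht1 hD heq =>
    simp only [totalFuel]
    have hD'eq : D' = s.depot + Finsupp.single (s.pos i) (D' (s.pos i) - s.depot (s.pos i)) := by
      ext q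
      rcases eq_or_ne q (s.pos i) with rfl | hq
      · simp
      · simp [heq q hq, Finsupp.single_eq_of_ne' (Ne.symm hq)]
    rw [hD'eq, Finsupp.sum_add_index' (fun _ => rfl) (fun _ _ _ => rfl),
      Finsupp.sum_single_index rfl,
      Finset.sum_update_of_mem (Finset.mem_univ i),
      Finset.sum_eq_add_sum_sdiff_singleton_of_mem (Finset.mem_univ i) s.tank]
    simp
    linarith
  | transferJeep i j hij hpos ti' tj' hcons hi0 hi1 hj0 hj1 =>
    simp only [totalFuel]
    have hij' : i ∈ Finset.univ \ {j} := by
      simp [Finset.mem_sdiff, hij]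
    rw [Finset.sum_update_of_mem (Finset.mem_univ j),
      Finset.sum_update_of_mem hij',
      Finset.sum_eq_add_sum_sdiff_singleton_of_mem (Finset.mem_univ j) s.tank,
      Finset.sum_eq_add_sum_sdiff_singleton_of_mem hij' s.tank]
    simp
    linarith

end JeepAux2
namespace JeepAux3
open JeepAux
variable {N : ℕ}

lemma fwdI_self (y a : ℝ) : fwdI y a a = 0 := by
  simp only [fwdI, ite_eq_right_iff, and_imp]
  intro h1 h2; linarith

lemma abs_eq_max_sub_min (a b : ℝ) : |b - a| = max a b - min a b := by
  rcases le_total a b with h | h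
  · rw [abs_of_nonneg (by linarith), max_eq_right h, min_eq_left h]
  · rw [abs_of_nonpos (by linarith), max_eq_left h, min_eq_right h]; ring

lemma drive_key (y a b t : ℝ) (h0 : 0 ≤ t - |b - a|) (h1 : t ≤ 1) :
    (if y < b then t - |b - a| else 0) + consR y a b ≤ (if y < a then t else 0) + fwdI y a b := by
  have hfw : fwdI y a b = (if a ≤ y then 1 else 0) * (if y < b then 1 else 0) := by
    unfold fwdI; by_cases h1 : a ≤ y <;> by_cases h2 : y < b <;> simp [h1, h2]
  rw [abs_eq_max_sub_min] at h0 ⊢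
  rw [hfw]
  simp only [consR]
  rcases le_total a b with hab2 | hab2
  · rw [max_eq_right hab2, min_eq_left hab2] at h0 ⊢
    simp only [max_def]
    split_ifs <;> linarith
  · rw [max_eq_left hab2, min_eq_right hab2] at h0 ⊢
    simp only [max_def]
    split_ifs <;> linarith

lemma fuelRight_nonneg {s : MultiState N} (hs : MInv s) (y : ℝ) : 0 ≤ fuelRight y s := by
  obtain ⟨ht, hd⟩ := hs
  refine add_nonneg (Finset.sum_nonneg fun q _ => ?_) (Finset.sum_nonneg fun i _ => ?_)
  · dsimp only; split_ifs; exacts [hd q, le_refl 0]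
  · split_ifs; exacts [(ht i).1, le_refl 0]

lemma step_region {s s' : MultiState N} (h : MultiStep s s') (hs : MInv s) (y : ℝ) :
    fuelRight y s' + ∑ i, consR y (s.pos i) (s'.pos i) ≤
      fuelRight y s + ∑ i, fwdI y (s.pos i) (s'.pos i) := by
  obtain ⟨ht, hd⟩ := hs
  cases h with
  | drive i p' hdr =>
    simp only [fuelRight]
    have hc : (fun i' => consR y (s.pos i') (Function.update s.pos i p' i'))
        = Function.update (fun _ => (0:ℝ)) i (consR y (s.pos i) p') := by
      funext i'
      rcases eq_or_ne i' i with rfl | hne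
      · simp
      · simp [Function.update_of_ne hne, consR_self]
    have hf : (fun i' => fwdI y (s.pos i') (Function.update s.pos i p' i'))
        = Function.update (fun _ => (0:ℝ)) i (fwdI y (s.pos i) p') := by
      funext i'
      rcases eq_or_ne i' i with rfl | hne
      · simp
      · simp [Function.update_of_ne hne, fwdI_self]
    have htk : (fun i' => if y < Function.update s.pos i p' i' then
          Function.update s.tank i (s.tank i - |p' - s.pos i|) i' else 0)
        = Function.update (fun i' => if y < s.pos i' then s.tank i' else 0) i
            (if y < p' then s.tank i - |p' - s.pos i| else 0) := by
      funext i'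
      rcases eq_or_ne i' i with rfl | hne
      · simp
      · simp [Function.update_of_ne hne]
    rw [hc, hf, htk, Finset.sum_update_of_mem (Finset.mem_univ i),
      Finset.sum_update_of_mem (Finset.mem_univ i),
      Finset.sum_update_of_mem (Finset.mem_univ i),
      Finset.sum_eq_add_sum_sdiff_singleton_of_mem (Finset.mem_univ i)
        (fun i' => if y < s.pos i' then s.tank i' else 0)]
    have key := drive_key y (s.pos i) p' (s.tank i) hdr (ht i).2
    simp only [Finset.sum_const_zero]
    linarith
  | transferDepot i t' D' hcons ht0 ht1 hD heq =>
    simp only [fuelRight, consR_self, fwdI_self, Finset.sum_const_zero]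
    have hD'eq : D' = s.depot + Finsupp.single (s.pos i) (D' (s.pos i) - s.depot (s.pos i)) := by
      ext q
      rcases eq_or_ne q (s.pos i) with rfl | hq
      · simp
      · simp [heq q hq, Finsupp.single_eq_of_ne' (Ne.symm hq)]
    have hz : ∀ a : ℝ, (if y < a then (0:ℝ) else 0) = 0 := fun a => ite_self 0
    have hadd : ∀ (a : ℝ) (b1 b2 : ℝ), (if y < a then b1 + b2 else 0)
        = (if y < a then b1 else 0) + (if y < a then b2 else 0) := by
      intro a b1 b2; split_ifs <;> simp
    have htk : (fun i' => if y < s.pos i' then Function.update s.tank i t' i' else 0)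
        = Function.update (fun i' => if y < s.pos i' then s.tank i' else 0) i
            (if y < s.pos i then t' else 0) := by
      funext i'
      rcases eq_or_ne i' i with rfl | hne
      · simp
      · simp [Function.update_of_ne hne]
    rw [hD'eq, Finsupp.sum_add_index' (h := fun q v => if y < q then v else 0) hz hadd,
      Finsupp.sum_single_index (h := fun q v => if y < q then v else 0) (hz _), htk,
      Finset.sum_update_of_mem (Finset.mem_univ i),
      Finset.sum_eq_add_sum_sdiff_singleton_of_mem (Finset.mem_univ i)
        (fun i' => if y < s.pos i' then s.tank i' else 0)]
    split_ifs <;> linarith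
  | transferJeep i j hij hpos ti' tj' hcons hi0 hi1 hj0 hj1 =>
    simp only [fuelRight, consR_self, fwdI_self, Finset.sum_const_zero]
    have hij' : i ∈ Finset.univ \ {j} := by simp [Finset.mem_sdiff, hij]
    have htk : (fun i' => if y < s.pos i' then
          Function.update (Function.update s.tank i ti') j tj' i' else 0)
        = Function.update (Function.update (fun i' => if y < s.pos i' then s.tank i' else 0) i
            (if y < s.pos i then ti' else 0)) j (if y < s.pos j then tj' else 0) := by
      funext i'
      rcases eq_or_ne i' j with rfl | hnej
      · simp
      · rw [Function.update_of_ne hnej, Function.update_of_ne hnej]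
        rcases eq_or_ne i' i with rfl | hnei
        · simp
        · rw [Function.update_of_ne hnei, Function.update_of_ne hnei]
    rw [htk, Finset.sum_update_of_mem (Finset.mem_univ j),
      Finset.sum_update_of_mem hij',
      Finset.sum_eq_add_sum_sdiff_singleton_of_mem (Finset.mem_univ j)
        (fun i' => if y < s.pos i' then s.tank i' else 0),
      Finset.sum_eq_add_sum_sdiff_singleton_of_mem hij'
        (fun i' => if y < s.pos i' then s.tank i' else 0)]
    rw [hpos]
    split_ifs <;> linarith

end JeepAux3
namespace JeepAux4
open JeepAux JeepAux2 JeepAux3 Finset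
variable {N : ℕ}

/-- Total consumption to the right of `y` along the plan. -/
noncomputable def consTot (k : ℕ) (f : ℕ → MultiState N) (y : ℝ) : ℝ :=
  ∑ j ∈ range k, ∑ i, consR y ((f j).pos i) ((f (j+1)).pos i)

/-- Number of forward crossings of `y` along the plan. -/
noncomputable def fwdCount (k : ℕ) (f : ℕ → MultiState N) (y : ℝ) : ℕ :=
  ∑ j ∈ range k, ∑ i : Fin N,
    if (f j).pos i ≤ y ∧ y < (f (j+1)).pos i then 1 else 0

/-- Number of crossings (either direction) of `y` along the plan. -/
noncomputable def crossCount (k : ℕ) (f : ℕ → MultiState N) (y : ℝ) : ℕ :=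
  ∑ j ∈ range k, ∑ i : Fin N,
    if min ((f j).pos i) ((f (j+1)).pos i) ≤ y ∧ y < max ((f j).pos i) ((f (j+1)).pos i)
    then 1 else 0

lemma fwdCount_le_crossCount (k : ℕ) (f : ℕ → MultiState N) (y : ℝ) :
    fwdCount k f y ≤ crossCount k f y := by
  refine Finset.sum_le_sum fun j _ => Finset.sum_le_sum fun i _ => ?_
  by_cases h : (f j).pos i ≤ y ∧ y < (f (j+1)).pos i
  · rw [if_pos h, if_pos ⟨le_trans (min_le_left _ _) h.1, lt_of_lt_of_le h.2 (le_max_right _ _)⟩]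
  · rw [if_neg h]; positivity

lemma consTot_nonneg (k : ℕ) (f : ℕ → MultiState N) (y : ℝ) : 0 ≤ consTot k f y :=
  Finset.sum_nonneg fun j _ => Finset.sum_nonneg fun i _ => consR_nonneg _ _ _

lemma plan_inv (f : ℕ → MultiState N) (hinv0 : MInv (f 0)) :
    ∀ K, (∀ j < K, MultiStep (f j) (f (j+1))) → MInv (f K) := by
  intro K
  induction K with
  | zero => exact fun _ => hinv0
  | succ K ih =>
    intro hstep
    exact step_inv (hstep K (Nat.lt_succ_self K)) (ih fun j hj => hstep j (by omega))

lemma plan_region (f : ℕ → MultiState N) (hinv0 : MInv (f 0)) (y : ℝ) :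
    ∀ K, (∀ j < K, MultiStep (f j) (f (j+1))) →
      fuelRight y (f K) + consTot K f y ≤
        fuelRight y (f 0) + ∑ j ∈ range K, ∑ i, fwdI y ((f j).pos i) ((f (j+1)).pos i) := by
  intro K
  induction K with
  | zero => simp [consTot]
  | succ K ih =>
    intro hstep
    have h1 := step_region (hstep K (Nat.lt_succ_self K))
      (plan_inv f hinv0 K (fun j hj => hstep j (by omega))) y
    have h2 := ih (fun j hj => hstep j (by omega))
    simp only [consTot] at h2 ⊢
    rw [Finset.sum_range_succ, Finset.sum_range_succ]
    linarith

lemma plan_total (f : ℕ → MultiState N) :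
    ∀ K, (∀ j < K, MultiStep (f j) (f (j+1))) →
      totalFuel (f K) + ∑ j ∈ range K, ∑ i, |(f (j+1)).pos i - (f j).pos i|
        = totalFuel (f 0) := by
  intro K
  induction K with
  | zero => simp
  | succ K ih =>
    intro hstep
    have h1 := step_total (hstep K (Nat.lt_succ_self K))
    have h2 := ih (fun j hj => hstep j (by omega))
    rw [Finset.sum_range_succ]
    linarith

lemma fuelRight_init (x y : ℝ) (hy : 0 ≤ y) : fuelRight y (multiInit N x) = 0 := by
  unfold fuelRight multiInit
  rw [Finsupp.sum_single_index (h := fun q v => if y < q then v else 0) (ite_self 0)]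
  simp [not_lt.2 hy]

lemma totalFuel_init (x : ℝ) : totalFuel (multiInit N x) = x := by
  unfold totalFuel multiInit
  rw [Finsupp.sum_single_index (h := fun _ v => v) rfl]
  simp

lemma MInv_init (x : ℝ) (hx : 0 ≤ x) : MInv (multiInit N x) := by
  refine ⟨fun i => ?_, fun q => ?_⟩
  · exact ⟨le_refl 0, zero_le_one⟩
  · simp only [multiInit, Finsupp.single_apply]
    split_ifs <;> [exact hx; exact le_refl 0]

/-- `fwdI` sums are casts of `fwdCount`. -/
lemma fwdI_sum_eq (k : ℕ) (f : ℕ → MultiState N) (y : ℝ) :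
    ∑ j ∈ range k, ∑ i, fwdI y ((f j).pos i) ((f (j+1)).pos i) = (fwdCount k f y : ℝ) := by
  unfold fwdI fwdCount
  push_cast
  rfl

end JeepAux4
namespace JeepAux5
open JeepAux JeepAux2 JeepAux3 JeepAux4 Finset
variable {N : ℕ}

lemma consR_minmax (y a b : ℝ) : consR y (min a b) (max a b) = consR y a b := by
  simp [consR, max_eq_right (min_le_max (a := a) (b := b)),
    min_eq_left (min_le_max (a := a) (b := b))]

lemma consR_mono {y y' : ℝ} (m M : ℝ) (hmM : m ≤ M) (h : y ≤ y') :
    consR y' m M ≤ consR y m M := by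
  simp only [consR, max_def, min_def]
  split_ifs <;> linarith

lemma pair_partition (m M y y' δ : ℝ) (hmM : m ≤ M) (hyy' : y ≤ y') (hδ : 0 < δ)
    (Q : ℕ) (hQ : y + Q * δ = y') :
    δ * (((Finset.range Q).filter fun r : ℕ => m ≤ y + (r:ℝ) * δ ∧ y + (r:ℝ) * δ < M).card : ℝ)
      ≤ (consR y m M - consR y' m M) + δ := by
  set S := (Finset.range Q).filter fun r : ℕ => m ≤ y + (r:ℝ) * δ ∧ y + (r:ℝ) * δ < M with hSdef
  rcases S.eq_empty_or_nonempty with hS | hS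
  · rw [hS]
    have := consR_mono m M hmM hyy'
    simp
    linarith
  · set r0 := S.min' hS with hr0def
    set r1 := S.max' hS with hr1def
    have hr0S := Finset.mem_filter.1 (S.min'_mem hS)
    have hr1S := Finset.mem_filter.1 (S.max'_mem hS)
    have hr1Q : r1 < Q := Finset.mem_range.1 hr1S.1
    have hr01 : r0 ≤ r1 := S.min'_le r1 (S.max'_mem hS)
    have hsub : S ⊆ Finset.Icc r0 r1 :=
      fun r hr => Finset.mem_Icc.2 ⟨S.min'_le r hr, S.le_max' r hr⟩
    have hcard : S.card ≤ r1 + 1 - r0 := by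
      have := Finset.card_le_card hsub
      rwa [Nat.card_Icc] at this
    have hcardR : (S.card : ℝ) ≤ (r1 : ℝ) - r0 + 1 := by
      have h1 : (S.card : ℝ) ≤ ((r1 + 1 - r0 : ℕ) : ℝ) := Nat.cast_le.2 hcard
      rw [Nat.cast_sub (by omega)] at h1
      push_cast at h1 ⊢
      linarith
    have hmul : δ * (S.card : ℝ) ≤ δ * ((r1 : ℝ) - r0 + 1) :=
      mul_le_mul_of_nonneg_left hcardR hδ.le
    have e1 : δ * ((r1 : ℝ) - r0 + 1) = (y + r1 * δ) - (y + r0 * δ) + δ := by ring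
    -- t1 < y'
    have ht1 : y + r1 * δ + δ ≤ y' := by
      rw [← hQ]
      have : (r1 : ℝ) + 1 ≤ Q := by exact_mod_cast hr1Q
      nlinarith
    have ht0y : y ≤ y + r0 * δ := by
      have : (0:ℝ) ≤ (r0:ℝ) * δ := mul_nonneg (Nat.cast_nonneg r0) hδ.le
      linarith
    -- consR facts
    rw [consR, consR, max_eq_right hmM, min_eq_left hmM]
    have f1 : M ≤ max M y := le_max_left M y
    have f2 : y' ≤ max m y' := le_max_right m y'
    have f3 : max M y' + min M y' = M + y' := max_add_min M y'
    have f4 : max m y ≤ y + r0 * δ := max_le hr0S.2.1 ht0y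
    have f5 : y + r1 * δ < M := hr1S.2.2
    have f6 : min M y' = M ⊓ y' := rfl
    have f7 : y + r1 * δ ≤ min M y' := le_min f5.le (by linarith)
    linarith

lemma consTot_step (k : ℕ) (f : ℕ → MultiState N) (y y' : ℝ) (hyy' : y ≤ y') (c : ℕ)
    (hc : ∀ t, y ≤ t → t < y' → c ≤ fwdCount k f t) :
    (c : ℝ) * (y' - y) + consTot k f y' ≤ consTot k f y := by
  rcases eq_or_lt_of_le hyy' with rfl | hlt
  · simp
  refine le_of_forall_pos_le_add fun ε hε => ?_
  obtain ⟨Q, hQbig⟩ := exists_nat_gt ((k * N) * (y' - y) / ε)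
  have hQpos : 0 < Q := by
    have : (0:ℝ) ≤ (k * N) * (y' - y) / ε :=
      div_nonneg (mul_nonneg (by positivity) (by linarith)) hε.le
    have : (0:ℝ) < Q := lt_of_le_of_lt this hQbig
    exact_mod_cast this
  set δ := (y' - y) / Q with hδdef
  have hδ : 0 < δ := div_pos (by linarith) (by exact_mod_cast hQpos)
  have hQδ : y + Q * δ = y' := by
    rw [hδdef, mul_div_assoc', mul_div_cancel_left₀ _ (by exact_mod_cast hQpos.ne' : (Q:ℝ) ≠ 0)]; ring
  have key : ∀ j ∈ range k, ∀ i : Fin N,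
      δ * (((Finset.range Q).filter fun r : ℕ =>
          min ((f j).pos i) ((f (j+1)).pos i) ≤ y + (r:ℝ) * δ ∧
            y + (r:ℝ) * δ < max ((f j).pos i) ((f (j+1)).pos i)).card : ℝ)
        ≤ (consR y ((f j).pos i) ((f (j+1)).pos i)
            - consR y' ((f j).pos i) ((f (j+1)).pos i)) + δ := by
    intro j _ i
    have := pair_partition (min ((f j).pos i) ((f (j+1)).pos i))
      (max ((f j).pos i) ((f (j+1)).pos i)) y y' δ min_le_max hyy' hδ Q hQδ
    rwa [consR_minmax, consR_minmax] at this
  have h1 : ∑ j ∈ range k, ∑ i : Fin N,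
      δ * (((Finset.range Q).filter fun r : ℕ =>
          min ((f j).pos i) ((f (j+1)).pos i) ≤ y + (r:ℝ) * δ ∧
            y + (r:ℝ) * δ < max ((f j).pos i) ((f (j+1)).pos i)).card : ℝ)
      ≤ (consTot k f y - consTot k f y') + (k * N) * δ := by
    have := Finset.sum_le_sum fun j hj =>
      Finset.sum_le_sum fun i (hi : i ∈ Finset.univ) => key j hj i
    refine le_trans this (le_of_eq ?_)
    unfold consTot
    rw [← Finset.sum_sub_distrib]
    simp only [Finset.sum_add_distrib, Finset.sum_sub_distrib, Finset.sum_const,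
      Finset.card_univ, Fintype.card_fin, nsmul_eq_mul, Finset.card_range]
    push_cast
    ring
  have h2 : ∑ j ∈ range k, ∑ i : Fin N,
      (((Finset.range Q).filter fun r : ℕ =>
          min ((f j).pos i) ((f (j+1)).pos i) ≤ y + (r:ℝ) * δ ∧
            y + (r:ℝ) * δ < max ((f j).pos i) ((f (j+1)).pos i)).card)
      = ∑ r ∈ range Q, crossCount k f (y + r * δ) := by
    simp only [Finset.card_filter, crossCount]
    refine Eq.trans (Finset.sum_congr rfl fun j _ => Finset.sum_comm) ?_
    exact Finset.sum_comm
  have h3 : ∀ r ∈ range Q, (c:ℕ) ≤ crossCount k f (y + (r:ℝ) * δ) := by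
    intro r hr
    have hrQ := Finset.mem_range.1 hr
    have hty : y ≤ y + (r:ℝ) * δ := by
      have := mul_nonneg (Nat.cast_nonneg r) hδ.le
      linarith
    have hty' : y + (r:ℝ) * δ < y' := by
      rw [← hQδ]
      have h1 : (r:ℝ) + 1 ≤ Q := by exact_mod_cast hrQ
      nlinarith
    exact le_trans (hc _ hty hty') (fwdCount_le_crossCount k f _)
  have h4 : (Q * c : ℕ) ≤ ∑ r ∈ range Q, crossCount k f (y + (r:ℝ) * δ) := by
    calc (Q * c : ℕ) = ∑ _r ∈ range Q, c := by
          rw [Finset.sum_const, Finset.card_range, smul_eq_mul]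
      _ ≤ _ := Finset.sum_le_sum h3
  have h4R : (Q:ℝ) * c ≤ ∑ r ∈ range Q, (crossCount k f (y + (r:ℝ) * δ) : ℝ) := by
    exact_mod_cast h4
  have h2R : (∑ j ∈ range k, ∑ i : Fin N,
      (((Finset.range Q).filter fun r : ℕ =>
          min ((f j).pos i) ((f (j+1)).pos i) ≤ y + (r:ℝ) * δ ∧
            y + (r:ℝ) * δ < max ((f j).pos i) ((f (j+1)).pos i)).card : ℝ))
      = ∑ r ∈ range Q, (crossCount k f (y + (r:ℝ) * δ) : ℝ) := by
    exact_mod_cast h2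
  have h6 : ∑ j ∈ range k, ∑ i : Fin N,
      δ * (((Finset.range Q).filter fun r : ℕ =>
          min ((f j).pos i) ((f (j+1)).pos i) ≤ y + (r:ℝ) * δ ∧
            y + (r:ℝ) * δ < max ((f j).pos i) ((f (j+1)).pos i)).card : ℝ)
      = δ * ∑ r ∈ range Q, (crossCount k f (y + (r:ℝ) * δ) : ℝ) := by
    rw [← h2R]
    simp only [Finset.mul_sum]
  have h5 : δ * ((Q:ℝ) * c) ≤ δ * ∑ r ∈ range Q, (crossCount k f (y + (r:ℝ) * δ) : ℝ) :=
    mul_le_mul_of_nonneg_left h4R hδ.le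
  have hQR : (0:ℝ) < Q := by exact_mod_cast hQpos
  have hδε : (k * N : ℝ) * δ < ε := by
    rw [div_lt_iff₀ hε] at hQbig
    rw [hδdef, mul_div_assoc', div_lt_iff₀ hQR]
    linarith
  have e : δ * ((Q:ℝ) * c) = (c:ℝ) * (y' - y) := by
    rw [hδdef]
    field_simp
  linarith

end JeepAux5
open JeepAux JeepAux2 JeepAux3 JeepAux4 JeepAux5 Finset in
/-- With `n ≥ 1` designated crossing jeeps and any number `m` of helper jeeps,
for every plan with `x ≥ n` tankloads in which each designated jeep reaches a
state with position `≥ d`, one has `d ≤ 1 + Σ_{j=n+1}^{x} 1/j`. -/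
theorem multi_helpers_oneway_bound (n x m : ℕ) (hn : 1 ≤ n) (hx : n ≤ x)
    (d : ℝ) (k : ℕ) (f : ℕ → MultiState (n + m))
    (h0 : f 0 = multiInit (n + m) (x : ℝ))
    (hstep : ∀ j < k, MultiStep (f j) (f (j + 1)))
    (hreach : ∀ i : Fin (n + m), (i : ℕ) < n → ∃ j ≤ k, d ≤ (f j).pos i) :
    d ≤ 1 + ∑ l ∈ Finset.Icc (n + 1) x, 1 / (l : ℝ) := by
  classical
  have hinv0 : MInv (f 0) := by rw [h0]; exact MInv_init _ (Nat.cast_nonneg x)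
  have hA : ∀ y : ℝ, 0 ≤ y → consTot k f y ≤ (fwdCount k f y : ℝ) := by
    intro y hy
    have h1 := plan_region f hinv0 y k hstep
    rw [fwdI_sum_eq, h0, fuelRight_init _ _ hy] at h1
    have h2 := fuelRight_nonneg (plan_inv f hinv0 k hstep) y
    linarith
  have hD : consTot k f 0 ≤ (x:ℝ) := by
    have h1 := plan_total f k hstep
    rw [h0, totalFuel_init] at h1
    have h2 : MInv (f k) := plan_inv f hinv0 k hstep
    have h3 : 0 ≤ totalFuel (f k) := by
      obtain ⟨ht, hd⟩ := h2
      refine add_nonneg (Finset.sum_nonneg fun q _ => ?_) (Finset.sum_nonneg fun i _ => ?_)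
      · exact hd q
      · exact (ht i).1
    have h4 : consTot k f 0 ≤ ∑ j ∈ range k, ∑ i, |(f (j+1)).pos i - (f j).pos i| :=
      Finset.sum_le_sum fun j _ => Finset.sum_le_sum fun i _ => consR_le_abs _ _
    linarith
  have hFwdn : ∀ t : ℝ, 0 ≤ t → t < d → (n : ℕ) ≤ fwdCount k f t := by
    intro t ht htd
    have hcross : ∀ i : Fin (n+m), (i:ℕ) < n →
        ∃ j, j < k ∧ (f j).pos i ≤ t ∧ t < (f (j+1)).pos i := by
      intro i hi
      obtain ⟨ji, hjik, hjid⟩ := hreach i hi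
      have hP : ∃ j, t < (f j).pos i := ⟨ji, lt_of_lt_of_le htd hjid⟩
      have hj'P := Nat.find_spec hP
      have hj'0 : Nat.find hP ≠ 0 := by
        intro h
        rw [h, h0] at hj'P
        simp only [multiInit] at hj'P
        linarith
      have hj'le : Nat.find hP ≤ ji := Nat.find_min' hP (lt_of_lt_of_le htd hjid)
      obtain ⟨j, hj⟩ : ∃ j, Nat.find hP = j + 1 := ⟨Nat.find hP - 1, by omega⟩
      refine ⟨j, by omega, ?_, by rw [← hj]; exact hj'P⟩
      have := Nat.find_min hP (by omega : j < Nat.find hP)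
      linarith [not_lt.1 this]
    have hswap : fwdCount k f t = ∑ i : Fin (n+m), ∑ j ∈ range k,
        if (f j).pos i ≤ t ∧ t < (f (j+1)).pos i then 1 else 0 := Finset.sum_comm
    rw [hswap]
    have hone : ∀ i : Fin (n+m), (i:ℕ) < n →
        1 ≤ ∑ j ∈ range k, if (f j).pos i ≤ t ∧ t < (f (j+1)).pos i then 1 else 0 := by
      intro i hi
      obtain ⟨j, hjk, h1, h2⟩ := hcross i hi
      calc (1:ℕ) = if (f j).pos i ≤ t ∧ t < (f (j+1)).pos i then 1 else 0 :=
            (if_pos ⟨h1, h2⟩).symm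
        _ ≤ _ := Finset.single_le_sum (f := fun j => if (f j).pos i ≤ t ∧ t < (f (j+1)).pos i
              then 1 else 0) (fun _ _ => Nat.zero_le _) (Finset.mem_range.2 hjk)
    have hcount : (∑ i : Fin (n+m), if (i:ℕ) < n then 1 else 0) = n := by
      rw [Fin.sum_univ_eq_sum_range (fun j => if j < n then 1 else 0), Finset.sum_boole]
      have hfil : (range (n+m)).filter (fun j => j < n) = range n := by
        ext j; simp only [Finset.mem_filter, Finset.mem_range]; omega
      rw [hfil]
      simp
    calc n = ∑ i : Fin (n+m), if (i:ℕ) < n then 1 else 0 := hcount.symm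
      _ ≤ _ := Finset.sum_le_sum fun i _ => by
          by_cases hi : (i:ℕ) < n
          · rw [if_pos hi]; exact hone i hi
          · rw [if_neg hi]; exact Nat.zero_le _
  have hBump : ∀ (t : ℝ) (c : ℕ), 0 ≤ t → (c:ℝ) < consTot k f t → (c+1 : ℕ) ≤ fwdCount k f t := by
    intro t c ht hlt
    have h1 := hA t ht
    have h2 : (c:ℝ) < (fwdCount k f t : ℝ) := lt_of_lt_of_le hlt h1
    have h3 : c < fwdCount k f t := by exact_mod_cast h2
    omega
  have hst0 : ∀ z : ℝ, 0 ≤ z → z ≤ d → (n:ℝ) * (d - z) ≤ consTot k f z := by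
    intro z hz hzd
    have h1 := consTot_step k f z d hzd n (fun t htz htd =>
      hFwdn t (le_trans hz htz) htd)
    have h2 := consTot_nonneg k f d
    linarith
  have hn1 : (1:ℝ) ≤ n := by exact_mod_cast hn
  have main : ∀ j : ℕ, n ≤ j → ∀ z : ℝ, 0 ≤ z →
      z ≤ d - 1 - ∑ l ∈ Finset.Icc (n+1) j, (1:ℝ)/l →
      (j:ℝ) + ((j:ℝ)+1) * ((d - 1 - ∑ l ∈ Finset.Icc (n+1) j, (1:ℝ)/l) - z) ≤ consTot k f z := by
    intro j hj
    induction j, hj using Nat.le_induction with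
    | base =>
      rw [Finset.Icc_eq_empty (by omega : ¬ n + 1 ≤ n)]
      simp only [Finset.sum_empty, sub_zero]
      intro z hz hzd
      have hd1 : (0:ℝ) ≤ d - 1 := by linarith
      have hfwd1 : ∀ t, z ≤ t → t < d - 1 → ((n+1 : ℕ):ℕ) ≤ fwdCount k f t := by
        intro t htz htd
        have ht0 : 0 ≤ t := le_trans hz htz
        have h1 : (n:ℝ) * (d - t) ≤ consTot k f t := hst0 t ht0 (by linarith)
        have h2 : (n:ℝ) < consTot k f t := by nlinarith
        exact hBump t n ht0 h2
      have hstep1 := consTot_step k f z (d-1) (by linarith) (n+1) hfwd1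
      have hbase := hst0 (d-1) hd1 (by linarith)
      have he : (n:ℝ) * (d - (d-1)) = n := by ring
      push_cast at hstep1
      linarith
    | succ j hj ih =>
      intro z hz hzd
      rw [Finset.sum_Icc_succ_top (by omega : n + 1 ≤ j + 1)] at hzd ⊢
      set S : ℝ := ∑ l ∈ Finset.Icc (n+1) j, (1:ℝ)/l with hS
      set w : ℝ := d - 1 - S with hw
      have hjpos : (0:ℝ) < (j:ℝ) + 1 := by positivity
      have hw' : d - 1 - (S + 1/((j:ℕ)+1 : ℝ)) = w - 1/((j:ℝ)+1) := by
        push_cast; ring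
      rw [show ((((j:ℕ)+1 : ℕ)) : ℝ) = (j:ℝ) + 1 by push_cast; ring] at *
      have hzw' : z ≤ w - 1/((j:ℝ)+1) := by
        push_cast at hzd; linarith
      have hfwd : ∀ t, z ≤ t → t < w - 1/((j:ℝ)+1) → (j+1+1 : ℕ) ≤ fwdCount k f t := by
        intro t htz htd
        have ht0 : 0 ≤ t := le_trans hz htz
        have htw : t ≤ w := by
          have : (0:ℝ) < 1/((j:ℝ)+1) := by positivity
          linarith
        have h1 := ih t ht0 htw
        have h2 : ((j:ℝ)+1) < consTot k f t := by
          have h3 : 1/((j:ℝ)+1) < w - t := by linarith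
          have h4 : ((j:ℝ)+1) * (1/((j:ℝ)+1)) = 1 := by field_simp
          nlinarith
        have := hBump t (j+1) ht0 (by push_cast; exact h2)
        omega
      have hstep1 := consTot_step k f z (w - 1/((j:ℝ)+1)) hzw' (j+1+1) hfwd
      have hw'0 : 0 ≤ w - 1/((j:ℝ)+1) := le_trans hz hzw'
      have hbase := ih (w - 1/((j:ℝ)+1)) hw'0 (by
        have : (0:ℝ) < 1/((j:ℝ)+1) := by positivity
        linarith)
      have h4 : ((j:ℝ)+1) * (1/((j:ℝ)+1)) = 1 := by field_simp
      push_cast at hstep1 ⊢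
      nlinarith
  by_contra hcon
  push_neg at hcon
  have hzx : 0 < d - 1 - ∑ l ∈ Finset.Icc (n+1) x, (1:ℝ)/l := by
    have : ∑ l ∈ Finset.Icc (n+1) x, (1:ℝ)/l = ∑ l ∈ Finset.Icc (n+1) x, 1/(l:ℝ) := rfl
    linarith
  have hm := main x hx 0 le_rfl (by linarith)
  have hxpos : (0:ℝ) < (x:ℝ) + 1 := by positivity
  nlinarith
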